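/- For every natural number k there exist polynomials p_k and q_k in ℚ[X] such that for every natural number n, p_k(n) = ∑_{1 ≤ x_1 < x_2 < ⋯ < x_k ≤ n} x_1·x_2⋯x_k and q_k(n) = ∑_{1 ≤ x_1 ≤ x_2 ≤ ⋯ ≤ x_k ≤ n} x_1·x_2⋯x_k; both p_k and q_k have degree 2k, and they satisfy the polynomial identity p_k(X−1) = q_k(−X) in ℚ[X]. -/

import Mathlib

open Polynomial Finset

private def Cnat (k n : ℕ) : ℕ :=
  ∑ f ∈ Finset.univ.filter (fun f : Fin k → Fin n =>
      ∀ a b : Fin k, a < b → f a < f b),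
    ∏ i : Fin k, ((f i : ℕ) + 1)

private def Gnat (k n : ℕ) : ℕ :=
  ∑ f ∈ Finset.univ.filter (fun f : Fin k → Fin n =>
      ∀ a b : Fin k, a ≤ b → f a ≤ f b),
    ∏ i : Fin k, ((f i : ℕ) + 1)

private lemma Cnat_zero (n : ℕ) : Cnat 0 n = 1 := by
  rw [Cnat, Finset.filter_true_of_mem (fun f _ => by intro a; exact a.elim0)]
  simp

private lemma Gnat_zero (n : ℕ) : Gnat 0 n = 1 := by
  rw [Gnat, Finset.filter_true_of_mem (fun f _ => by intro a; exact a.elim0)]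
  simp

private lemma Cnat_succ (k n : ℕ) :
    Cnat (k + 1) n = ∑ m ∈ range n, (m + 1) * Cnat k m := by
  have key : ∀ y : Fin n,
      (∑ f ∈ Finset.univ.filter (fun f : Fin (k+1) → Fin n =>
          (∀ a b : Fin (k+1), a < b → f a < f b) ∧ f (Fin.last k) = y),
        ∏ i : Fin (k+1), ((f i : ℕ) + 1))
      = ((y : ℕ) + 1) * Cnat k (y : ℕ) := by
    intro y
    rw [Cnat, Finset.mul_sum]
    refine Finset.sum_bij'
      (fun f hf => fun j : Fin k => (⟨(f j.castSucc : ℕ), by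
        obtain ⟨h1, h2⟩ := (Finset.mem_filter.1 hf).2
        have := h1 j.castSucc (Fin.last k) (Fin.castSucc_lt_last j)
        rw [h2] at this
        exact this⟩ : Fin (y : ℕ)))
      (fun g _ => Fin.snoc (fun i : Fin k =>
        (⟨(g i : ℕ), (g i).isLt.trans y.isLt⟩ : Fin n)) y)
      (fun f hf => Finset.mem_filter.2 ⟨Finset.mem_univ _, by
        intro a b hab
        obtain ⟨h1, _⟩ := (Finset.mem_filter.1 hf).2
        exact h1 a.castSucc b.castSucc (by rwa [Fin.castSucc_lt_castSucc_iff])⟩)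
      (fun g hg => Finset.mem_filter.2 ⟨Finset.mem_univ _, by
        constructor
        · intro a b hab
          induction b using Fin.lastCases with
          | last =>
            obtain ⟨a', rfl⟩ := Fin.exists_castSucc_eq.2 (ne_of_lt hab)
            simp only [Fin.snoc_castSucc, Fin.snoc_last]
            exact (g a').isLt
          | cast b' =>
            have ha : a ≠ Fin.last k :=
              ne_of_lt (lt_trans hab (Fin.castSucc_lt_last b'))
            obtain ⟨a', rfl⟩ := Fin.exists_castSucc_eq.2 ha
            simp only [Fin.snoc_castSucc]
            have := (Finset.mem_filter.1 hg).2 a' b'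
              (Fin.castSucc_lt_castSucc_iff.1 hab)
            exact this
        · exact Fin.snoc_last _ _⟩)
      (fun f hf => by
        funext x
        induction x using Fin.lastCases with
        | last =>
          simp only [Fin.snoc_last]
          exact ((Finset.mem_filter.1 hf).2.2).symm
        | cast i =>
          simp only [Fin.snoc_castSucc])
      (fun g hg => by
        funext x
        apply Fin.ext
        simp only [Fin.snoc_castSucc])
      (fun f hf => by
        rw [Fin.prod_univ_castSucc]
        simp only []
        rw [(Finset.mem_filter.1 hf).2.2]
        ring)
  rw [Cnat, ← Finset.sum_fiberwise_of_maps_to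
    (g := fun f : Fin (k+1) → Fin n => f (Fin.last k)) (t := Finset.univ)
    (fun f _ => Finset.mem_univ _)]
  rw [← Fin.sum_univ_eq_sum_range (fun m => (m + 1) * Cnat k m) n]
  refine Finset.sum_congr rfl (fun y _ => ?_)
  rw [← key y, Finset.filter_filter]

private lemma Gnat_succ (k n : ℕ) :
    Gnat (k + 1) n = ∑ m ∈ range n, (m + 1) * Gnat k (m + 1) := by
  have key : ∀ y : Fin n,
      (∑ f ∈ Finset.univ.filter (fun f : Fin (k+1) → Fin n =>
          (∀ a b : Fin (k+1), a ≤ b → f a ≤ f b) ∧ f (Fin.last k) = y),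
        ∏ i : Fin (k+1), ((f i : ℕ) + 1))
      = ((y : ℕ) + 1) * Gnat k ((y : ℕ) + 1) := by
    intro y
    rw [Gnat, Finset.mul_sum]
    refine Finset.sum_bij'
      (fun f hf => fun j : Fin k => (⟨(f j.castSucc : ℕ), by
        obtain ⟨h1, h2⟩ := (Finset.mem_filter.1 hf).2
        have := h1 j.castSucc (Fin.last k) (Fin.castSucc_lt_last j).le
        rw [h2] at this
        exact Nat.lt_succ_of_le this⟩ : Fin ((y : ℕ) + 1)))
      (fun g _ => Fin.snoc (fun i : Fin k =>
        (⟨(g i : ℕ), lt_of_le_of_lt (Nat.lt_succ_iff.1 (g i).isLt) y.isLt⟩ : Fin n)) y)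
      (fun f hf => Finset.mem_filter.2 ⟨Finset.mem_univ _, by
        intro a b hab
        obtain ⟨h1, _⟩ := (Finset.mem_filter.1 hf).2
        exact h1 a.castSucc b.castSucc (by rwa [Fin.castSucc_le_castSucc_iff])⟩)
      (fun g hg => Finset.mem_filter.2 ⟨Finset.mem_univ _, by
        constructor
        · intro a b hab
          induction b using Fin.lastCases with
          | last =>
            induction a using Fin.lastCases with
            | last => exact le_refl _
            | cast a' =>
              simp only [Fin.snoc_castSucc, Fin.snoc_last]
              exact Nat.lt_succ_iff.1 (g a').isLt
          | cast b' =>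
            have ha : a ≠ Fin.last k :=
              ne_of_lt (lt_of_le_of_lt hab (Fin.castSucc_lt_last b'))
            obtain ⟨a', rfl⟩ := Fin.exists_castSucc_eq.2 ha
            simp only [Fin.snoc_castSucc]
            exact (Finset.mem_filter.1 hg).2 a' b'
              (Fin.castSucc_le_castSucc_iff.1 hab)
        · exact Fin.snoc_last _ _⟩)
      (fun f hf => by
        funext x
        induction x using Fin.lastCases with
        | last =>
          simp only [Fin.snoc_last]
          exact ((Finset.mem_filter.1 hf).2.2).symm
        | cast i =>
          simp only [Fin.snoc_castSucc])
      (fun g hg => by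
        funext x
        apply Fin.ext
        simp only [Fin.snoc_castSucc])
      (fun f hf => by
        rw [Fin.prod_univ_castSucc]
        simp only []
        rw [(Finset.mem_filter.1 hf).2.2]
        ring)
  rw [Gnat, ← Finset.sum_fiberwise_of_maps_to
    (g := fun f : Fin (k+1) → Fin n => f (Fin.last k)) (t := Finset.univ)
    (fun f _ => Finset.mem_univ _)]
  rw [← Fin.sum_univ_eq_sum_range (fun m => (m + 1) * Gnat k (m + 1)) n]
  refine Finset.sum_congr rfl (fun y _ => ?_)
  rw [← key y, Finset.filter_filter]


private lemma eq_of_nat_eval (t u : Polynomial ℚ) (h : ∀ n : ℕ, t.eval (n : ℚ) = u.eval (n : ℚ)) :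
    t = u := by
  rw [← sub_eq_zero]
  refine Polynomial.eq_zero_of_infinite_isRoot _ ?_
  apply Set.Infinite.mono (s := Set.range (fun n : ℕ => (n : ℚ)))
  · rintro x ⟨n, rfl⟩
    simp [Polynomial.IsRoot, h n]
  · exact Set.infinite_range_of_injective (fun a b hab => by exact_mod_cast hab)


private lemma const_of_shift (t : Polynomial ℚ) (h : t.comp (X + 1) = t)
    (h0 : t.eval 0 = 0) : t = 0 := by
  have key : ∀ n : ℕ, t.eval (n : ℚ) = 0 := by
    intro n
    induction n with
    | zero => simpa using h0
    | succ n ih =>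
      have := congrArg (Polynomial.eval (n : ℚ)) h
      simp [eval_comp] at this
      push_cast
      rw [this]
      exact ih
  refine Polynomial.eq_zero_of_infinite_isRoot t ?_
  apply Set.Infinite.mono (s := Set.range (fun n : ℕ => (n : ℚ)))
  · rintro x ⟨n, rfl⟩; exact key n
  · exact Set.infinite_range_of_injective (fun a b => by exact_mod_cast id)

private lemma antideriv_aux (d : ℕ) : ∀ r : Polynomial ℚ, r.natDegree = d →
    ∃ s : Polynomial ℚ, s.comp (X + 1) - s = r ∧ s.eval 0 = 0 ∧
      (r ≠ 0 → s.natDegree = r.natDegree + 1) := by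
  induction d using Nat.strong_induction_on with
  | _ d ih =>
  intro r hd
  rcases eq_or_ne r 0 with rfl | hr
  · exact ⟨0, by simp⟩
  set c := r.leadingCoeff with hc
  have hc0 : c ≠ 0 := leadingCoeff_ne_zero.2 hr
  set t : Polynomial ℚ := C (c / (d + 1)) * X ^ (d + 1) with ht
  have hcoef : ∀ m, (t.comp (X + 1) - t).coeff m
      = (c / (d+1)) * ((d+1).choose m - if m = d+1 then 1 else 0) := by
    intro m
    simp [ht, coeff_X_add_one_pow, coeff_X_pow, mul_sub, mul_ite]
  have hΔd : (t.comp (X + 1) - t).coeff d = c := by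
    rw [hcoef]
    simp [Nat.choose_succ_self_right]
    field_simp
  have hΔdeg : (t.comp (X + 1) - t).natDegree ≤ d := by
    apply natDegree_le_iff_coeff_eq_zero.2
    intro m hm
    rw [hcoef]
    rcases eq_or_lt_of_le (Nat.succ_le_of_lt hm) with h | h
    · simp [← h]
    · rw [Nat.choose_eq_zero_of_lt h, if_neg (by omega)]; simp
  set u : Polynomial ℚ := r - (t.comp (X + 1) - t) with hu
  have hud : u.coeff d = 0 := by
    rw [hu, coeff_sub, hΔd, ← hd, coeff_natDegree, ← hc, sub_self]
  have htdeg : t.natDegree = d + 1 := by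
    rw [ht, natDegree_C_mul (by positivity), natDegree_X_pow]
  have ht0 : t.eval 0 = 0 := by simp [ht]
  rcases eq_or_ne u 0 with hu0 | hu0
  · have h' : r - (t.comp (X + 1) - t) = 0 := hu ▸ hu0
    exact ⟨t, (sub_eq_zero.mp h').symm, ht0, fun _ => by rw [htdeg, hd]⟩
  · have hudeg : u.natDegree < d := by
      have h1 : u.natDegree ≤ d := by
        apply natDegree_le_iff_coeff_eq_zero.2
        intro m hm
        rw [hu, coeff_sub, natDegree_le_iff_coeff_eq_zero.1 hd.le m hm,
          natDegree_le_iff_coeff_eq_zero.1 hΔdeg m hm, sub_zero]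
      rcases lt_or_eq_of_le h1 with h | h
      · exact h
      · have hL : u.leadingCoeff = 0 := by rw [leadingCoeff, h]; exact hud
        exact absurd (leadingCoeff_eq_zero.1 hL) hu0
    obtain ⟨s', hs'Δ, hs'0, hs'deg⟩ := ih u.natDegree hudeg u rfl
    refine ⟨t + s', ?_, by simp [ht0, hs'0], fun _ => ?_⟩
    · rw [add_comp, add_sub_add_comm, hs'Δ, hu]; ring
    · rw [natDegree_add_eq_left_of_natDegree_lt, htdeg, hd]
      rw [htdeg, hs'deg hu0]; omega

private lemma antideriv (r : Polynomial ℚ) :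
    ∃ s : Polynomial ℚ, s.comp (X + 1) - s = r ∧ s.eval 0 = 0 ∧
      (r ≠ 0 → s.natDegree = r.natDegree + 1) :=
  antideriv_aux r.natDegree r rfl

private lemma antideriv_eval {s r : Polynomial ℚ} (h : s.comp (X + 1) - s = r)
    (h0 : s.eval 0 = 0) (n : ℕ) : s.eval (n : ℚ) = ∑ m ∈ range n, r.eval (m : ℚ) := by
  induction n with
  | zero => simpa using h0
  | succ n ih =>
    have := congrArg (Polynomial.eval (n : ℚ)) h
    simp [eval_comp] at this
    rw [Finset.sum_range_succ, ← ih, ← this]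
    push_cast
    ring


private lemma duality (p q p' q' : Polynomial ℚ)
    (hΔp : p'.comp (X + 1) - p' = (X + 1) * p)
    (hp0 : p'.eval 0 = 0)
    (hΔq : q'.comp (X + 1) - q' = (X + 1) * q.comp (X + 1))
    (hq0 : q'.eval 0 = 0)
    (hpq : p.comp (X - 1) = q.comp (-X)) :
    p'.comp (X - 1) = q'.comp (-X) := by
  have Ep : ∀ x : ℚ, p'.eval (x + 1) - p'.eval x = (x + 1) * p.eval x := by
    intro x
    have := congrArg (Polynomial.eval x) hΔp
    simpa [eval_comp] using this
  have Eq' : ∀ x : ℚ, q'.eval (x + 1) - q'.eval x = (x + 1) * q.eval (x + 1) := by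
    intro x
    have := congrArg (Polynomial.eval x) hΔq
    simpa [eval_comp] using this
  have Dpq : ∀ x : ℚ, p.eval (x - 1) = q.eval (-x) := by
    intro x
    have := congrArg (Polynomial.eval x) hpq
    simpa [eval_comp] using this
  have hpm1 : p'.eval (-1) = 0 := by
    have := Ep (-1)
    simp at this
    linarith [this, hp0]
  apply eq_of_nat_eval
  intro n
  simp only [eval_comp, eval_sub, eval_neg, eval_X, eval_one]
  induction n with
  | zero => simpa [hpm1] using hq0.symm
  | succ n ih =>
    have E1 := Ep ((n : ℚ) - 1)
    rw [show ((n : ℚ) - 1) + 1 = (n : ℚ) by ring] at E1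
    have E2 := Eq' (-(n : ℚ) - 1)
    rw [show (-(n : ℚ) - 1) + 1 = -(n : ℚ) by ring] at E2
    have D := Dpq (n : ℚ)
    push_cast
    rw [show ((n : ℚ) + 1 - 1) = (n : ℚ) by ring, show (-((n:ℚ) + 1)) = -(n:ℚ) - 1 by ring]
    push_cast at ih
    linear_combination ih + E1 + E2 + (n : ℚ) * D

private lemma stmt_aux (k : ℕ) :
    ∃ p q : Polynomial ℚ,
      (∀ n : ℕ, p.eval (n : ℚ) = (Cnat k n : ℚ)) ∧
      (∀ n : ℕ, q.eval (n : ℚ) = (Gnat k n : ℚ)) ∧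
      p.natDegree = 2 * k ∧ q.natDegree = 2 * k ∧
      p.comp (Polynomial.X - 1) = q.comp (-Polynomial.X) ∧ p ≠ 0 ∧ q ≠ 0 := by
  induction k with
  | zero =>
    refine ⟨1, 1, ?_, ?_, by simp, by simp, by simp, one_ne_zero, one_ne_zero⟩
    · intro n; rw [Cnat_zero]; simp
    · intro n; rw [Gnat_zero]; simp
  | succ k ih =>
    obtain ⟨p, q, hp, hq, hdp, hdq, hpq, hpne, hqne⟩ := ih
    have hX : (X + 1 : Polynomial ℚ) ≠ 0 := by
      intro h
      have := congrArg (Polynomial.eval 0) h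
      simp at this
    have hXdeg : (X + 1 : Polynomial ℚ).natDegree = 1 := by
      rw [← C_1, natDegree_X_add_C]
    have hqcne : q.comp (X + 1) ≠ 0 := by
      intro h
      apply hqne
      have := congrArg (fun r : Polynomial ℚ => r.comp (X - 1)) h
      simp only [zero_comp, comp_assoc] at this
      rw [show ((X : Polynomial ℚ) + 1).comp (X - 1) = X by
        simp [add_comp]] at this
      simpa using this
    have hrpne : (X + 1) * p ≠ 0 := mul_ne_zero hX hpne
    have hrqne : (X + 1) * q.comp (X + 1) ≠ 0 := mul_ne_zero hX hqcne
    obtain ⟨p', hΔp, hp'0, hdegp'⟩ := antideriv ((X + 1) * p)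
    obtain ⟨q', hΔq, hq'0, hdegq'⟩ := antideriv ((X + 1) * q.comp (X + 1))
    have hp'ne : p' ≠ 0 := fun h => hrpne (by rw [← hΔp, h]; simp)
    have hq'ne : q' ≠ 0 := fun h => hrqne (by rw [← hΔq, h]; simp)
    refine ⟨p', q', ?_, ?_, ?_, ?_, duality p q p' q' hΔp hp'0 hΔq hq'0 hpq, hp'ne, hq'ne⟩
    · intro n
      rw [antideriv_eval hΔp hp'0 n, Cnat_succ]
      push_cast
      refine Finset.sum_congr rfl (fun m hm => ?_)
      rw [eval_mul, eval_add, eval_X, eval_one, hp m]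
    · intro n
      rw [antideriv_eval hΔq hq'0 n, Gnat_succ]
      push_cast
      refine Finset.sum_congr rfl (fun m hm => ?_)
      have h2 := hq (m + 1)
      push_cast at h2
      rw [eval_mul, eval_add, eval_X, eval_one, eval_comp, eval_add, eval_X, eval_one, h2]
    · rw [hdegp' hrpne, natDegree_mul hX hpne, hXdeg, hdp]; ring
    · rw [hdegq' hrqne, natDegree_mul hX hqcne, hXdeg, natDegree_comp, hXdeg, hdq]; ring

/-- Kramp's sums of products `C_k(n)` (without repetition) and `Γ_k(n)` (with
repetition) are given by polynomials `p_k, q_k ∈ ℚ[X]` of degree `2k`, and these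
polynomials satisfy the duality identity `p_k(X-1) = q_k(-X)`.  Strictly
(resp. weakly) increasing sequences `1 ≤ x₁ < ⋯ < x_k ≤ n`
(resp. `1 ≤ x₁ ≤ ⋯ ≤ x_k ≤ n`) are encoded as strictly increasing
(resp. monotone) functions `f : Fin k → Fin n`, with `x_i = f i + 1`. -/
theorem stmt_10 (k : ℕ) :
    ∃ p q : Polynomial ℚ,
      (∀ n : ℕ, p.eval (n : ℚ) =
        ((∑ f ∈ Finset.univ.filter (fun f : Fin k → Fin n =>
            ∀ a b : Fin k, a < b → f a < f b),
          ∏ i : Fin k, ((f i : ℕ) + 1) : ℕ) : ℚ)) ∧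
      (∀ n : ℕ, q.eval (n : ℚ) =
        ((∑ f ∈ Finset.univ.filter (fun f : Fin k → Fin n =>
            ∀ a b : Fin k, a ≤ b → f a ≤ f b),
          ∏ i : Fin k, ((f i : ℕ) + 1) : ℕ) : ℚ)) ∧
      p.natDegree = 2 * k ∧ q.natDegree = 2 * k ∧
      p.comp (Polynomial.X - 1) = q.comp (-Polynomial.X) := by
  obtain ⟨p, q, hp, hq, hdp, hdq, hpq, -, -⟩ := stmt_aux k
  exact ⟨p, q, hp, hq, hdp, hdq, hpq⟩
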